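/- arXiv:2509.02302 — 6 statements merged into one kernel-verified Lean document; each statement's English description precedes it below -/
import Mathlib

section
/- In the online lead-time quotation problem OLTQ with patience limit ℓ, for any two histories I = (e_{1:m-1}, a_{1:m-1}) and I' = (e'_{1:m-1}, a'_{1:m-1}) and any request suffix e_{m:n} and action suffix a_{m:n}, the cumulative rewards differ by at most 2ℓ²: Val(OLTQ^I, e_{m:n}, a_{m:n}) ≥ Val(OLTQ^{I'}, e_{m:n}, a_{m:n}) - 2ℓ². In particular OLTQ is 2ℓ-bounded-influence (with per-period reward bound L = ℓ). -/
/-- Per-period reward of the online lead-time quotation (OLTQ) problem with patience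
limit `ℓ`: at period `t` the reward is `ℓ - (a_s(i) - s)` for the (unique) request
`(s, i)` scheduled at processing time `t` that is not blocked by an earlier accepted
request, and `0` otherwise.  `a s i = none` represents quoting an infinite lead time. -/
def Rolt (ℓ : ℕ) (e : ℕ → ℕ) (a : ℕ → ℕ → Option ℕ) (t : ℕ) : ℕ :=
  ∑ s ∈ Finset.Icc 1 t, ∑ i ∈ Finset.Icc 1 (e s),
    if a s i = some t ∧
        (∀ j ∈ Finset.Ico 1 s, ∀ k ∈ Finset.Icc 1 (e j), a j k ≠ some t) ∧
        (∀ k ∈ Finset.Ico 1 i, a s k ≠ some t)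
    then s + ℓ - t else 0

private lemma sum_le_single_bound {α : Type*} (S : Finset α) (f : α → ℕ) (B : ℕ)
    (hb : ∀ p ∈ S, f p ≤ B)
    (hu : ∀ p ∈ S, ∀ q ∈ S, f p ≠ 0 → f q ≠ 0 → p = q) : ∑ p ∈ S, f p ≤ B := by
  classical
  by_cases hex : ∃ p ∈ S, f p ≠ 0
  · obtain ⟨p, hpS, hp0⟩ := hex
    calc ∑ q ∈ S, f q = f p :=
        Finset.sum_eq_single_of_mem p hpS (fun q hq hqp => by
          by_contra h; exact hqp (hu q hq p hpS h hp0))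
      _ ≤ B := hb p hpS
  · push_neg at hex
    simpa [Finset.sum_eq_zero hex] using Nat.zero_le B

private lemma rolt_le (ℓ : ℕ) (e : ℕ → ℕ) (a : ℕ → ℕ → Option ℕ)
    (hrange : ∀ s i x, a s i = some x → s ≤ x ∧ x < s + ℓ) (t : ℕ) :
    Rolt ℓ e a t ≤ ℓ := by
  unfold Rolt
  rw [Finset.sum_sigma']
  refine sum_le_single_bound _ _ _ ?_ ?_
  · rintro ⟨s, i⟩ _
    dsimp only
    split_ifs with h
    · have := hrange s i t h.1
      omega
    · omega
  · rintro ⟨s, i⟩ hp ⟨s', i'⟩ hq hp0 hq0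
    dsimp only at hp0 hq0
    have hcp : a s i = some t ∧
        (∀ j ∈ Finset.Ico 1 s, ∀ k ∈ Finset.Icc 1 (e j), a j k ≠ some t) ∧
        (∀ k ∈ Finset.Ico 1 i, a s k ≠ some t) := by
      by_contra h; exact hp0 (if_neg h)
    have hcq : a s' i' = some t ∧
        (∀ j ∈ Finset.Ico 1 s', ∀ k ∈ Finset.Icc 1 (e j), a j k ≠ some t) ∧
        (∀ k ∈ Finset.Ico 1 i', a s' k ≠ some t) := by
      by_contra h; exact hq0 (if_neg h)
    have hpmem := Finset.mem_sigma.mp hp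
    have hqmem := Finset.mem_sigma.mp hq
    have hp1 : 1 ≤ s ∧ s ≤ t := Finset.mem_Icc.mp hpmem.1
    have hq1 : 1 ≤ s' ∧ s' ≤ t := Finset.mem_Icc.mp hqmem.1
    have hp2 : 1 ≤ i ∧ i ≤ e s := Finset.mem_Icc.mp hpmem.2
    have hq2 : 1 ≤ i' ∧ i' ≤ e s' := Finset.mem_Icc.mp hqmem.2
    rcases lt_trichotomy s s' with h1 | h1 | h1
    · exact absurd hcp.1 (hcq.2.1 s (Finset.mem_Ico.mpr ⟨hp1.1, h1⟩) i
        (Finset.mem_Icc.mpr hp2))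
    · subst h1
      rcases lt_trichotomy i i' with h2 | h2 | h2
      · exact absurd hcp.1 (hcq.2.2 i (Finset.mem_Ico.mpr ⟨hp2.1, h2⟩))
      · subst h2; rfl
      · exact absurd hcq.1 (hcp.2.2 i' (Finset.mem_Ico.mpr ⟨hq2.1, h2⟩))
    · exact absurd hcq.1 (hcp.2.1 s' (Finset.mem_Ico.mpr ⟨hq1.1, h1⟩) i'
        (Finset.mem_Icc.mpr hq2))

private lemma rolt_eq (ℓ m : ℕ) (e e' : ℕ → ℕ) (a a' : ℕ → ℕ → Option ℕ)
    (hrange : ∀ s i x, a s i = some x → s ≤ x ∧ x < s + ℓ)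
    (hrange' : ∀ s i x, a' s i = some x → s ≤ x ∧ x < s + ℓ)
    (hee : ∀ s, m ≤ s → e s = e' s) (haa : ∀ s, m ≤ s → a s = a' s)
    (t : ℕ) (ht : m + ℓ ≤ t + 1) :
    Rolt ℓ e a t = Rolt ℓ e' a' t := by
  have key : ∀ j k, j < m → a j k ≠ some t ∧ a' j k ≠ some t := by
    intro j k hj
    constructor <;> intro h
    · have := hrange j k t h; omega
    · have := hrange' j k t h; omega
  unfold Rolt
  refine Finset.sum_congr rfl (fun s _ => ?_)
  by_cases hsm : m ≤ s
  · rw [hee s hsm, haa s hsm]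
    refine Finset.sum_congr rfl (fun i _ => ?_)
    refine if_congr (and_congr_right fun _ => and_congr_left fun _ => ?_) rfl rfl
    constructor
    · intro h2 j hj k hk
      by_cases hjm : m ≤ j
      · rw [← haa j hjm]; exact h2 j hj k (by rwa [← hee j hjm] at hk)
      · exact (key j k (by omega)).2
    · intro h2 j hj k hk
      by_cases hjm : m ≤ j
      · rw [haa j hjm]; exact h2 j hj k (by rwa [hee j hjm] at hk)
      · exact (key j k (by omega)).1
  · push_neg at hsm
    rw [Finset.sum_eq_zero, Finset.sum_eq_zero]
    · intro i _
      rw [if_neg]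
      rintro ⟨h1, -, -⟩
      exact (key s i hsm).2 h1
    · intro i _
      rw [if_neg]
      rintro ⟨h1, -, -⟩
      exact (key s i hsm).1 h1

/-- OLTQ is 2ℓ²-bounded-influence: for any two histories before period `m`
(same requests and actions from period `m` onwards), the cumulative rewards over any
window `m, …, n` differ by at most `2ℓ²`. -/
theorem stmt_8 (ℓ m n : ℕ) (hℓ : 1 ≤ ℓ) (hm : 1 ≤ m)
    (e e' : ℕ → ℕ) (a a' : ℕ → ℕ → Option ℕ)
    (he : ∀ s, e s ≤ ℓ) (he' : ∀ s, e' s ≤ ℓ)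
    (hrange : ∀ s i x, a s i = some x → s ≤ x ∧ x < s + ℓ)
    (hrange' : ∀ s i x, a' s i = some x → s ≤ x ∧ x < s + ℓ)
    (hee : ∀ s, m ≤ s → e s = e' s) (haa : ∀ s, m ≤ s → a s = a' s) :
    ((∑ t ∈ Finset.Icc m n, Rolt ℓ e a t : ℕ) : ℝ)
      ≥ ((∑ t ∈ Finset.Icc m n, Rolt ℓ e' a' t : ℕ) : ℝ) - 2 * (ℓ : ℝ) ^ 2 := by
  classical
  have key : ∑ t ∈ Finset.Icc m n, Rolt ℓ e' a' t
      ≤ (∑ t ∈ Finset.Icc m n, Rolt ℓ e a t) + 2 * ℓ ^ 2 := by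
    have step1 : ∑ t ∈ Finset.Icc m n, Rolt ℓ e' a' t
        ≤ ∑ t ∈ Finset.Icc m n,
            (Rolt ℓ e a t + if t + 1 < m + ℓ then ℓ else 0) := by
      refine Finset.sum_le_sum fun t _ => ?_
      by_cases h : m + ℓ ≤ t + 1
      · rw [← rolt_eq ℓ m e e' a a' hrange hrange' hee haa t h, if_neg (by omega)]
        omega
      · rw [if_pos (by omega)]
        have := rolt_le ℓ e' a' hrange' t
        omega
    have step2 : ∑ t ∈ Finset.Icc m n, (if t + 1 < m + ℓ then ℓ else 0) ≤ ℓ * ℓ := by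
      rw [← Finset.sum_filter]
      have hsub : (Finset.Icc m n).filter (fun t => t + 1 < m + ℓ) ⊆
          Finset.Ico m (m + ℓ - 1) := by
        intro t ht
        have h1 := Finset.mem_Icc.mp (Finset.mem_of_mem_filter t ht)
        have h2 := (Finset.mem_filter.mp ht).2
        exact Finset.mem_Ico.mpr ⟨h1.1, by omega⟩
      calc ∑ _t ∈ (Finset.Icc m n).filter (fun t => t + 1 < m + ℓ), ℓ
          = ((Finset.Icc m n).filter (fun t => t + 1 < m + ℓ)).card * ℓ := by
            rw [Finset.sum_const, smul_eq_mul]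
        _ ≤ (Finset.Ico m (m + ℓ - 1)).card * ℓ :=
            Nat.mul_le_mul_right ℓ (Finset.card_le_card hsub)
        _ ≤ ℓ * ℓ := by rw [Nat.card_Ico]; exact Nat.mul_le_mul_right ℓ (by omega)
    calc ∑ t ∈ Finset.Icc m n, Rolt ℓ e' a' t
        ≤ ∑ t ∈ Finset.Icc m n,
            (Rolt ℓ e a t + if t + 1 < m + ℓ then ℓ else 0) := step1
      _ = (∑ t ∈ Finset.Icc m n, Rolt ℓ e a t)
            + ∑ t ∈ Finset.Icc m n, (if t + 1 < m + ℓ then ℓ else 0) :=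
          Finset.sum_add_distrib
      _ ≤ (∑ t ∈ Finset.Icc m n, Rolt ℓ e a t) + 2 * ℓ ^ 2 := by
          have : ℓ * ℓ ≤ 2 * ℓ ^ 2 := by nlinarith
          omega
  have := (Nat.cast_le (α := ℝ)).mpr key
  push_cast at this ⊢
  linarith
end

section
/- The k-server problem kSE_S on a metric space with distances in [0,1] is (2,2)-Lipschitz: for any history I, any two possible requests e_m and e'_m at period m, and any continuation e_{m+1:n}, |Opt(kSE_S^I, e_m∘e_{m+1:n}) - Opt(kSE_S^I, e'_m∘e_{m+1:n})| ≤ 2·d(e_m, e'_m). -/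
/-- Server configuration after `t` periods in the k-server problem. -/
def kpos {X : Type*} {k : ℕ} (S : Fin k → X) (e : ℕ → X) (a : ℕ → Fin k) :
    ℕ → Fin k → X
  | 0 => S
  | t + 1 => Function.update (kpos S e a t) (a (t + 1)) (e (t + 1))

/-- Total movement cost of an execution of the k-server problem over periods 1..N. -/
noncomputable def kVal {X : Type*} [MetricSpace X] {k : ℕ} (S : Fin k → X)
    (e : ℕ → X) (a : ℕ → Fin k) (N : ℕ) : ℝ :=
  ∑ t ∈ Finset.Icc 1 N, dist (kpos S e a (t - 1) (a t)) (e t)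

/-- Hindsight optimal cost of the k-server problem. -/
noncomputable def kOpt {X : Type*} [MetricSpace X] {k : ℕ} (S : Fin k → X)
    (e : ℕ → X) (N : ℕ) : ℝ :=
  ⨅ a : ℕ → Fin k, kVal S e a N

lemma kVal_succ {X : Type*} [MetricSpace X] {k : ℕ} (S : Fin k → X)
    (e : ℕ → X) (a : ℕ → Fin k) (N : ℕ) :
    kVal S e a (N + 1) = kVal S e a N + dist (kpos S e a N (a (N + 1))) (e (N + 1)) := by
  unfold kVal
  rw [Finset.sum_Icc_succ_top (by omega : 1 ≤ N + 1)]
  simp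

lemma kser_main {X : Type*} [MetricSpace X] {k : ℕ} (S : Fin k → X)
    (f f' : ℕ → X) (a : ℕ → Fin k) (hf : ∀ t, t ≠ 1 → f t = f' t) :
    ∀ n, 1 ≤ n →
      (kpos S f a n = kpos S f' a n ∧
        |kVal S f a n - kVal S f' a n| ≤ 2 * dist (f 1) (f' 1)) ∨
      ((∀ i, i ≠ a 1 → kpos S f a n i = kpos S f' a n i) ∧
        kpos S f a n (a 1) = f 1 ∧ kpos S f' a n (a 1) = f' 1 ∧
        |kVal S f a n - kVal S f' a n| ≤ dist (f 1) (f' 1)) := by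
  intro n
  induction n with
  | zero => omega
  | succ n ih =>
    intro _
    rcases Nat.eq_or_lt_of_le (show 1 ≤ n + 1 from le_refl _ |>.trans (by omega)) with h1 | h1
    · -- base case n + 1 = 1, i.e. n = 0
      have hn0 : n = 0 := by omega
      subst hn0
      right
      refine ⟨?_, ?_, ?_, ?_⟩
      · intro i hi
        show Function.update S (a 1) (f 1) i = Function.update S (a 1) (f' 1) i
        rw [Function.update_of_ne hi, Function.update_of_ne hi]
      · exact Function.update_self _ _ _
      · exact Function.update_self _ _ _
      · have h1 : kVal S f a 1 = dist (S (a 1)) (f 1) := by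
          unfold kVal; simp [kpos]
        have h2 : kVal S f' a 1 = dist (S (a 1)) (f' 1) := by
          unfold kVal; simp [kpos]
        rw [h1, h2, dist_comm (S (a 1)) (f 1), dist_comm (S (a 1)) (f' 1)]
        exact abs_dist_sub_le _ _ _
    · -- inductive step: n ≥ 1
      have hn1 : 1 ≤ n := by omega
      have hfe : f (n + 1) = f' (n + 1) := hf _ (by omega)
      have hv : kVal S f a (n + 1)
          = kVal S f a n + dist (kpos S f a n (a (n + 1))) (f (n + 1)) :=
        kVal_succ S f a n
      have hv' : kVal S f' a (n + 1)
          = kVal S f' a n + dist (kpos S f' a n (a (n + 1))) (f' (n + 1)) :=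
        kVal_succ S f' a n
      have hd : (0:ℝ) ≤ dist (f 1) (f' 1) := dist_nonneg
      rcases ih hn1 with ⟨heq, hval⟩ | ⟨hne, ha1, ha1', hval⟩
      · left
        constructor
        · show Function.update (kpos S f a n) (a (n+1)) (f (n+1))
            = Function.update (kpos S f' a n) (a (n+1)) (f' (n+1))
          rw [heq, hfe]
        · rw [hv, hv', heq, hfe]
          simpa using hval
      · by_cases hc : a (n + 1) = a 1
        · left
          constructor
          · funext i
            show Function.update (kpos S f a n) (a (n+1)) (f (n+1)) i
              = Function.update (kpos S f' a n) (a (n+1)) (f' (n+1)) i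
            by_cases hi : i = a (n + 1)
            · subst hi; rw [Function.update_self, Function.update_self, hfe]
            · rw [Function.update_of_ne hi, Function.update_of_ne hi,
                hne i (by rw [← hc]; exact hi)]
          · rw [hv, hv', hc, ha1, ha1', hfe]
            have hterm : |dist (f 1) (f' (n+1)) - dist (f' 1) (f' (n+1))|
                ≤ dist (f 1) (f' 1) := abs_dist_sub_le _ _ _
            calc |kVal S f a n + dist (f 1) (f' (n+1))
                  - (kVal S f' a n + dist (f' 1) (f' (n+1)))|
                ≤ |kVal S f a n - kVal S f' a n|
                  + |dist (f 1) (f' (n+1)) - dist (f' 1) (f' (n+1))| := by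
                  have := abs_add_le (kVal S f a n - kVal S f' a n)
                    (dist (f 1) (f' (n+1)) - dist (f' 1) (f' (n+1)))
                  calc |kVal S f a n + dist (f 1) (f' (n+1))
                      - (kVal S f' a n + dist (f' 1) (f' (n+1)))|
                      = |(kVal S f a n - kVal S f' a n)
                        + (dist (f 1) (f' (n+1)) - dist (f' 1) (f' (n+1)))| := by
                        ring_nf
                    _ ≤ _ := this
              _ ≤ dist (f 1) (f' 1) + dist (f 1) (f' 1) := add_le_add hval hterm
              _ = 2 * dist (f 1) (f' 1) := by ring
        · right
          have hca : a 1 ≠ a (n + 1) := fun h => hc h.symm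
          refine ⟨?_, ?_, ?_, ?_⟩
          · intro i hi
            show Function.update (kpos S f a n) (a (n+1)) (f (n+1)) i
              = Function.update (kpos S f' a n) (a (n+1)) (f' (n+1)) i
            by_cases hin : i = a (n + 1)
            · subst hin; rw [Function.update_self, Function.update_self, hfe]
            · rw [Function.update_of_ne hin, Function.update_of_ne hin, hne i hi]
          · show Function.update (kpos S f a n) (a (n+1)) (f (n+1)) (a 1) = f 1
            rw [Function.update_of_ne hca, ha1]
          · show Function.update (kpos S f' a n) (a (n+1)) (f' (n+1)) (a 1) = f' 1
            rw [Function.update_of_ne hca, ha1']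
          · rw [hv, hv', hfe, hne _ hc]
            simpa using hval

/-- The k-server problem (distances in [0,1]) is (2,2)-Lipschitz: after any history,
changing only the first request of the remaining window (from `f 1` to `f' 1`)
changes the hindsight optimal cost by at most `2·d(f 1, f' 1)`. -/
theorem stmt_12 {X : Type*} [MetricSpace X] (k : ℕ) (hk : 0 < k)
    (hb : ∀ x y : X, dist x y ≤ 1)
    (S : Fin k → X) (m : ℕ) (e : ℕ → X) (a : ℕ → Fin k)
    (n : ℕ) (f f' : ℕ → X) (hf : ∀ t, t ≠ 1 → f t = f' t) :
    |kOpt (kpos S e a m) f n - kOpt (kpos S e a m) f' n|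
      ≤ 2 * dist (f 1) (f' 1) := by
  set S' := kpos S e a m with hS'
  set d := dist (f 1) (f' 1) with hdd
  have hd0 : (0:ℝ) ≤ d := dist_nonneg
  have key : ∀ a' : ℕ → Fin k, |kVal S' f a' n - kVal S' f' a' n| ≤ 2 * d := by
    intro a'
    rcases Nat.eq_zero_or_pos n with hn | hn
    · subst hn
      have e1 : kVal S' f a' 0 = 0 := by unfold kVal; simp
      have e2 : kVal S' f' a' 0 = 0 := by unfold kVal; simp
      rw [e1, e2]
      simpa using mul_nonneg (by norm_num : (0:ℝ) ≤ 2) hd0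
    · rcases kser_main S' f f' a' hf n hn with ⟨_, h⟩ | ⟨_, _, _, h⟩
      · exact h
      · linarith
  have hne : Nonempty (ℕ → Fin k) := ⟨fun _ => ⟨0, hk⟩⟩
  have hbdd : ∀ g : ℕ → X, BddBelow (Set.range fun a' : ℕ → Fin k => kVal S' g a' n) := by
    intro g
    refine ⟨0, ?_⟩
    rintro _ ⟨a', rfl⟩
    exact Finset.sum_nonneg fun _ _ => dist_nonneg (α := X)
  have side : ∀ g g' : ℕ → X, (∀ a' : ℕ → Fin k, |kVal S' g a' n - kVal S' g' a' n| ≤ 2 * d) →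
      kOpt S' g n - kOpt S' g' n ≤ 2 * d := by
    intro g g' hgg
    have h1 : kOpt S' g n - 2 * d ≤ kOpt S' g' n := by
      apply le_ciInf
      intro a'
      have h2 : kOpt S' g n ≤ kVal S' g a' n := ciInf_le (hbdd g) a'
      have h3 := abs_le.mp (hgg a')
      linarith [h3.2]
    linarith
  have h1 := side f f' key
  have h2 := side f' f (fun a' => by rw [abs_sub_comm]; exact key a')
  rw [abs_sub_le_iff]
  exact ⟨h1, h2⟩
end

section
/- Let r_1,…,r_N, r'_1,…,r'_N ∈ {0,1} be two binary sequences satisfying: (a) if r_i = r'_i = 1 for some i, then r_j = r'_j for all j ≥ i; (b) whenever i < j, r_i = 0, r'_i = 1, r_t = r'_t = 0 for all i < t < j, and r'_j = 1, then r_j = 1; and (c) r_j ≥ r'_j whenever (r_j, r'_j) ≠ (0,1). Then Σ_{i=1}^N r_i ≥ (Σ_{i=1}^N r'_i) - 1. -/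
/-- Abstract combinatorial core of the strong-Lipschitz proof for reusable resource
allocation (Observation EC.3): for binary sequences `r, r'` on `{1,…,N}` such that
(a) once both succeed at a period all subsequent values coincide,
(b) between two successes of `r'` with no intermediate success of either, `r` must
also succeed at the later period, and
(c) `r j ≥ r' j` whenever `(r j, r' j) ≠ (0, 1)`,
the totals satisfy `Σ r ≥ Σ r' - 1`. -/
theorem stmt_15 (N : ℕ) (r r' : ℕ → ℕ)
    (hr : ∀ i, r i ≤ 1) (hr' : ∀ i, r' i ≤ 1)
    (ha : ∀ i, 1 ≤ i → i ≤ N → r i = 1 → r' i = 1 →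
      ∀ j, i ≤ j → j ≤ N → r j = r' j)
    (hb : ∀ i j, 1 ≤ i → i < j → j ≤ N → r i = 0 → r' i = 1 →
      (∀ t, i < t → t < j → r t = 0 ∧ r' t = 0) → r' j = 1 → r j = 1)
    (hc : ∀ j, 1 ≤ j → j ≤ N → ¬(r j = 0 ∧ r' j = 1) → r' j ≤ r j) :
    ((∑ i ∈ Finset.Icc 1 N, r i : ℕ) : ℤ)
      ≥ ((∑ i ∈ Finset.Icc 1 N, r' i : ℕ) : ℤ) - 1 := by
  classical
  set P : ℕ → Prop := fun n =>
    (∃ i, 1 ≤ i ∧ i ≤ n ∧ r i = 0 ∧ r' i = 1 ∧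
      ∀ t, i < t → t ≤ n → r t = 0 ∧ r' t = 0) ∨
    (∃ i, 1 ≤ i ∧ i ≤ n ∧ r i = 1 ∧ r' i = 1) with hPdef
  have key : ∀ n, n ≤ N →
      ((∑ i ∈ Finset.Icc 1 n, r' i : ℕ) : ℤ) ≤
        ((∑ i ∈ Finset.Icc 1 n, r i : ℕ) : ℤ) + (if P n then 1 else 0) := by
    intro n
    induction n with
    | zero =>
      intro _
      rw [Finset.Icc_eq_empty (by norm_num)]
      simp only [Finset.sum_empty]
      split <;> norm_num
    | succ n ih =>
      intro hn
      have hn' : n ≤ N := Nat.le_of_succ_le hn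
      have IH := ih hn'
      rw [Finset.sum_Icc_succ_top (Nat.succ_le_succ (Nat.zero_le n)),
          Finset.sum_Icc_succ_top (Nat.succ_le_succ (Nat.zero_le n))]
      push_cast
      rcases Nat.le_one_iff_eq_zero_or_eq_one.mp (hr (n+1)) with h1 | h1 <;>
        rcases Nat.le_one_iff_eq_zero_or_eq_one.mp (hr' (n+1)) with h2 | h2
      · -- (0,0) : P n → P (n+1)
        have hmono : P n → P (n+1) := by
          rintro (⟨i, hi1, hi2, hi3, hi4, hi5⟩ | ⟨i, hi1, hi2, hi3, hi4⟩)
          · exact Or.inl ⟨i, hi1, Nat.le_succ_of_le hi2, hi3, hi4, fun t ht1 ht2 => by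
              rcases Nat.lt_or_ge t (n+1) with h | h
              · exact hi5 t ht1 (Nat.lt_succ_iff.mp h)
              · have : t = n + 1 := le_antisymm ht2 h
                subst this; exact ⟨h1, h2⟩⟩
          · exact Or.inr ⟨i, hi1, Nat.le_succ_of_le hi2, hi3, hi4⟩
        have : (if P n then (1:ℤ) else 0) ≤ (if P (n+1) then 1 else 0) := by
          split
          · rw [if_pos (hmono (by assumption))]
          · split <;> norm_num
        rw [h1, h2]
        push_cast at IH ⊢
        linarith
      · -- (0,1) : show ¬ P n, and P (n+1) via pending witness n+1
        have hnotP : ¬ P n := by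
          rintro (⟨i, hi1, hi2, hi3, hi4, hi5⟩ | ⟨i, hi1, hi2, hi3, hi4⟩)
          · have := hb i (n+1) hi1 (Nat.lt_succ_of_le hi2) hn hi3 hi4
              (fun t ht1 ht2 => hi5 t ht1 (Nat.lt_succ_iff.mp ht2)) h2
            omega
          · have := ha i hi1 (le_trans hi2 hn') hi3 hi4 (n+1)
              (Nat.le_succ_of_le hi2) hn
            omega
        have hP1 : P (n+1) :=
          Or.inl ⟨n+1, Nat.succ_le_succ (Nat.zero_le n), le_refl _, h1, h2,
            fun t ht1 ht2 => absurd (lt_of_lt_of_le ht1 ht2) (lt_irrefl _)⟩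
        rw [h1, h2, if_pos hP1, if_neg hnotP] at *
        push_cast at IH ⊢
        linarith
      · -- (1,0)
        have hle : (if P n then (1:ℤ) else 0) ≤ 1 := by split <;> norm_num
        have hge : (0:ℤ) ≤ (if P (n+1) then 1 else 0) := by split <;> norm_num
        rw [h1, h2]
        push_cast at IH ⊢
        linarith
      · -- (1,1) : P (n+1) holds via locked
        have hP1 : P (n+1) :=
          Or.inr ⟨n+1, Nat.succ_le_succ (Nat.zero_le n), le_refl _, h1, h2⟩
        have hle : (if P n then (1:ℤ) else 0) ≤ 1 := by split <;> norm_num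
        rw [h1, h2, if_pos hP1]
        push_cast at IH ⊢
        linarith
  have h := key N (le_refl N)
  have : (if P N then (1:ℤ) else 0) ≤ 1 := by split <;> norm_num
  linarith
end

section
/- Suppose a problem P is (u,v)-Lipschitz with per-period reward bound L, metric d on requests, and let b = u, c ≥ v, and define the truncated distance d̂(e,e') = min(d(e,e'), c/b). If at every step after history I one executes the first action of an optimal plan computed under the assumption that all future requests equal the predictions e*_{m+1:∞}, and the real and predicted sequences differ in finitely many coordinates, then the realized cumulative reward satisfies Val(P^I, e_{m+1:∞}, a_{m+1:∞}) ≥ Opt(P^I, e*_{m+1:∞}) - bL·Σ_{i≥m+1} d̂(e_i, e*_i). -/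
/-- Hindsight optimum of the partial problem after history `(e_{1:m}, a_{1:m})`. -/
noncomputable def OptVal {E A : ℕ → Type*}
    (R : (t : ℕ) → (∀ s, E s) → (∀ s, A s) → ℝ)
    (e : ∀ s, E s) (a : ∀ s, A s) (m n : ℕ) : ℝ :=
  ⨆ a' : {a' : ∀ s, A s // ∀ s, s ≤ m → a' s = a s},
    ∑ t ∈ Finset.Icc (m + 1) n, R t e a'.1

/-- The sequence equal to `e` up to period `k` and to `f` afterwards. -/
def splice {E : ℕ → Type*} (k : ℕ) (e f : ∀ s, E s) : ∀ s, E s :=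
  fun s => if s ≤ k then e s else f s

/-- Iterated re-optimization against predictions (Lemma EC.3): with `b = u`, `c ≥ v`
and the truncated distance `d̂ = min(d, c/b)`, if at every step after the history one
executes the first action of an optimal plan computed as if all future requests were
the predictions `e*`, then the realized reward is at least
`Opt(P^I, e*_{m+1:∞}) - bL·Σ_i d̂(e_i, e*_i)`. -/
theorem stmt_16 {E A : ℕ → Type*}
    (L u v b c : ℝ) (hL : 0 ≤ L) (hbu : b = u) (hb : 0 < b) (hvc : v ≤ c)
    (R : (t : ℕ) → (∀ s, E s) → (∀ s, A s) → ℝ)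
    (d : (t : ℕ) → E t → E t → ℝ)
    (hprefix : ∀ (t : ℕ) (e e' : ∀ s, E s) (a a' : ∀ s, A s),
      (∀ s, s ≤ t → e s = e' s) → (∀ s, s ≤ t → a s = a' s) → R t e a = R t e' a')
    (hbound : ∀ t e a, R t e a ∈ Set.Icc (0 : ℝ) L)
    (hdnn : ∀ t x y, 0 ≤ d t x y) (hdself : ∀ t (x : E t), d t x x = 0)
    (hLip : ∀ (m n : ℕ) (e e' : ∀ s, E s) (a : ∀ s, A s), m ≤ n →
      (∀ s, s ≠ m + 1 → e s = e' s) →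
      |OptVal R e a m n - OptVal R e' a m n|
        ≤ L * min (u * d (m + 1) (e (m + 1)) (e' (m + 1))) v)
    (m M : ℕ) (hmM : m ≤ M)
    (e estar : ∀ s, E s)
    (hfin : ∀ t, M < t → ∀ (e'' : ∀ s, E s) (a'' : ∀ s, A s), R t e'' a'' = 0)
    (hagree : ∀ t, M < t → e t = estar t)
    (a : ∀ s, A s)
    (hgreedy : ∀ t, m < t → ∃ a' : ∀ s, A s,
      (∀ s, s ≤ t → a' s = a s) ∧
      ∀ a'' : ∀ s, A s, (∀ s, s < t → a'' s = a s) →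
        (∑ w ∈ Finset.Icc t M, R w (splice t e estar) a'')
          ≤ ∑ w ∈ Finset.Icc t M, R w (splice t e estar) a') :
    (∑ t ∈ Finset.Icc (m + 1) M, R t e a)
      ≥ OptVal R (splice m e estar) a m M
        - b * L * ∑ i ∈ Finset.Icc (m + 1) M, min (d i (e i) (estar i)) (c / b) := by
  have hbdd : ∀ (f : ∀ s, E s) (m' n : ℕ),
      BddAbove (Set.range fun a' : {a' : ∀ s, A s // ∀ s, s ≤ m' → a' s = a s} =>
        ∑ t ∈ Finset.Icc (m' + 1) n, R t f a'.1) := by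
    intro f m' n
    refine ⟨(Finset.Icc (m' + 1) n).card • L, ?_⟩
    rintro x ⟨a', rfl⟩
    exact Finset.sum_le_card_nsmul _ _ L fun t _ => (hbound t f a'.1).2
  have hne : ∀ m' : ℕ, Nonempty {a' : ∀ s, A s // ∀ s, s ≤ m' → a' s = a s} :=
    fun m' => ⟨⟨a, fun _ _ => rfl⟩⟩
  clear hmM hfin hagree
  suffices H : ∀ k m, M - m = k →
      (∀ t, m < t → ∃ a' : ∀ s, A s,
        (∀ s, s ≤ t → a' s = a s) ∧
        ∀ a'' : ∀ s, A s, (∀ s, s < t → a'' s = a s) →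
          (∑ w ∈ Finset.Icc t M, R w (splice t e estar) a'')
            ≤ ∑ w ∈ Finset.Icc t M, R w (splice t e estar) a') →
      (∑ t ∈ Finset.Icc (m + 1) M, R t e a)
        ≥ OptVal R (splice m e estar) a m M
          - b * L * ∑ i ∈ Finset.Icc (m + 1) M, min (d i (e i) (estar i)) (c / b) by
    exact H (M - m) m rfl hgreedy
  intro k
  induction k with
  | zero =>
    intro m hk hg
    have hempty : Finset.Icc (m + 1) M = ∅ := by
      rw [Finset.Icc_eq_empty_iff]; omega
    have : Nonempty {a' : ∀ s, A s // ∀ s, s ≤ m → a' s = a s} := hne m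
    simp [OptVal, hempty, ciSup_const]
  | succ k ih =>
    intro m hk hg
    have hmM' : m < M := by omega
    obtain ⟨a', ha'eq, ha'opt⟩ := hg (m + 1) (by omega)
    set f := splice (m + 1) e estar with hf
    have hsplit : ∀ g : ℕ → ℝ, ∑ t ∈ Finset.Icc (m + 1) M, g t
        = g (m + 1) + ∑ t ∈ Finset.Icc (m + 2) M, g t := by
      intro g
      rw [Finset.Icc_eq_cons_Ioc (by omega : m + 1 ≤ M), Finset.sum_cons,
        ← Finset.Icc_add_one_left_eq_Ioc]; rfl
    -- step 1 : Opt over the spliced-(m+1) sequence decomposes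
    have hstep1 : OptVal R f a m M ≤ R (m + 1) e a + OptVal R f a (m + 1) M := by
      have : Nonempty {a'' : ∀ s, A s // ∀ s, s ≤ m → a'' s = a s} := hne m
      refine ciSup_le fun a'' => ?_
      have h1 : ∑ t ∈ Finset.Icc (m + 1) M, R t f a''.1
          ≤ ∑ t ∈ Finset.Icc (m + 1) M, R t f a' :=
        ha'opt a''.1 (fun s hs => a''.2 s (by omega))
      have h2 : R (m + 1) f a' = R (m + 1) e a := by
        refine hprefix (m + 1) f e a' a (fun s hs => ?_) (fun s hs => ha'eq s hs)
        simp [hf, splice, hs]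
      have h3 : ∑ t ∈ Finset.Icc (m + 2) M, R t f a' ≤ OptVal R f a (m + 1) M :=
        le_ciSup (hbdd f (m + 1) M) (⟨a', ha'eq⟩ :
          {a'' : ∀ s, A s // ∀ s, s ≤ m + 1 → a'' s = a s})
      calc ∑ t ∈ Finset.Icc (m + 1) M, R t f a''.1
          ≤ ∑ t ∈ Finset.Icc (m + 1) M, R t f a' := h1
        _ = R (m + 1) f a' + ∑ t ∈ Finset.Icc (m + 2) M, R t f a' := hsplit _
        _ ≤ R (m + 1) e a + OptVal R f a (m + 1) M := by rw [h2]; linarith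
    -- step 2 : Lipschitz comparison between splice m and splice (m+1)
    have hfe : f (m + 1) = e (m + 1) := by simp [hf, splice]
    have hse : splice m e estar (m + 1) = estar (m + 1) := by simp [splice]
    have hLip' : |OptVal R f a m M - OptVal R (splice m e estar) a m M|
        ≤ L * min (u * d (m + 1) (e (m + 1)) (estar (m + 1))) v := by
      have := hLip m M f (splice m e estar) a (by omega) (fun s hs => ?_)
      · rwa [hfe, hse] at this
      · by_cases h : s ≤ m
        · simp [hf, splice, h, Nat.le_succ_of_le h]
        · have h1 : ¬ s ≤ m + 1 := by omega
          simp [hf, splice, h, h1]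
    have hstep2 : OptVal R (splice m e estar) a m M ≤ OptVal R f a m M
        + L * min (u * d (m + 1) (e (m + 1)) (estar (m + 1))) v := by
      have := abs_le.mp hLip'
      linarith [this.1]
    -- step 3 : the Lipschitz bound is at most the truncated-distance bound
    have hstep3 : L * min (u * d (m + 1) (e (m + 1)) (estar (m + 1))) v
        ≤ b * L * min (d (m + 1) (e (m + 1)) (estar (m + 1))) (c / b) := by
      have hmin : b * min (d (m + 1) (e (m + 1)) (estar (m + 1))) (c / b)
          = min (b * d (m + 1) (e (m + 1)) (estar (m + 1))) c := by
        rw [mul_min_of_nonneg _ _ hb.le, mul_div_cancel₀ c hb.ne']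
      have h1 : min (u * d (m + 1) (e (m + 1)) (estar (m + 1))) v
          ≤ min (b * d (m + 1) (e (m + 1)) (estar (m + 1))) c := by
        rw [hbu]; exact min_le_min le_rfl hvc
      calc L * min (u * d (m + 1) (e (m + 1)) (estar (m + 1))) v
          ≤ L * min (b * d (m + 1) (e (m + 1)) (estar (m + 1))) c :=
            mul_le_mul_of_nonneg_left h1 hL
        _ = b * L * min (d (m + 1) (e (m + 1)) (estar (m + 1))) (c / b) := by
            rw [mul_comm b L, mul_assoc, hmin]
    -- step 4 : induction hypothesis at m+1
    have hIH := ih (m + 1) (by omega) (fun t ht => hg t (by omega))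
    rw [hsplit (fun t => R t e a), hsplit (fun i => min (d i (e i) (estar i)) (c / b)),
      mul_add]
    have : OptVal R f a (m + 1) M = OptVal R (splice (m + 1) e estar) a (m + 1) M := rfl
    rw [this] at hstep1
    linarith [hIH, hstep1, hstep2, hstep3]
end

section
/- Under the same hypotheses as the previous statement, and assuming additionally that P is f-bounded-influence with f ≤ c, the two-sided comparison to the true hindsight optimum holds over any finite window: Val(P^I, e_{m+1:m+n}, a_{m+1:m+n}) ≥ Opt(P^I, e_{m+1:m+n}) - 2bL·Σ_{i=m+1}^{m+n} d̂(e_i, e*_i) - cL. -/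
/-- Predictive-epoch regret bound (Lemma 2): under the (u,v)-Lipschitz hypothesis,
the f-bounded-influence hypothesis with `f ≤ c`, and iterated re-optimization against
the predictions `e*`, on any finite window the realized reward compares to the true
hindsight optimum: `Val ≥ Opt - 2bL·Σ d̂(e_i, e*_i) - cL`. -/
theorem stmt_17 {E A : ℕ → Type*}
    (L u v b c f : ℝ) (hL : 0 ≤ L) (hbu : b = u) (hb : 0 < b) (hvc : v ≤ c)
    (hfc : f ≤ c)
    (R : (t : ℕ) → (∀ s, E s) → (∀ s, A s) → ℝ)
    (d : (t : ℕ) → E t → E t → ℝ)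
    (hprefix : ∀ (t : ℕ) (e e' : ∀ s, E s) (a a' : ∀ s, A s),
      (∀ s, s ≤ t → e s = e' s) → (∀ s, s ≤ t → a s = a' s) → R t e a = R t e' a')
    (hbound : ∀ t e a, R t e a ∈ Set.Icc (0 : ℝ) L)
    (hdnn : ∀ t x y, 0 ≤ d t x y) (hdself : ∀ t (x : E t), d t x x = 0)
    (hLip : ∀ (m' n' : ℕ) (e e' : ∀ s, E s) (a : ∀ s, A s), m' ≤ n' →
      (∀ s, s ≠ m' + 1 → e s = e' s) →
      |OptVal R e a m' n' - OptVal R e' a m' n'|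
        ≤ L * min (u * d (m' + 1) (e (m' + 1)) (e' (m' + 1))) v)
    (hBI : ∀ (m' n' : ℕ) (e1 e2 : ∀ s, E s) (a1 a2 : ∀ s, A s),
      (∀ s, m' < s → e1 s = e2 s) →
      |OptVal R e1 a1 m' n' - OptVal R e2 a2 m' n'| ≤ f * L)
    (m n M : ℕ) (hmn : m + n ≤ M)
    (e estar : ∀ s, E s)
    (hfin : ∀ t, M < t → ∀ (e'' : ∀ s, E s) (a'' : ∀ s, A s), R t e'' a'' = 0)
    (hagree : ∀ t, M < t → e t = estar t)
    (a : ∀ s, A s)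
    (hgreedy : ∀ t, m < t → ∃ a' : ∀ s, A s,
      (∀ s, s ≤ t → a' s = a s) ∧
      ∀ a'' : ∀ s, A s, (∀ s, s < t → a'' s = a s) →
        (∑ w ∈ Finset.Icc t M, R w (splice t e estar) a'')
          ≤ ∑ w ∈ Finset.Icc t M, R w (splice t e estar) a') :
    (∑ t ∈ Finset.Icc (m + 1) (m + n), R t e a)
      ≥ OptVal R e a m (m + n)
        - 2 * b * L * ∑ i ∈ Finset.Icc (m + 1) (m + n), min (d i (e i) (estar i)) (c / b)
        - c * L := by
  classical
  -- basic helpers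
  have hne : ∀ (aa : ∀ s, A s) (k : ℕ),
      Nonempty {a' : ∀ s, A s // ∀ s, s ≤ k → a' s = aa s} :=
    fun aa k => ⟨⟨aa, fun _ _ => rfl⟩⟩
  have hbdd : ∀ (ee : ∀ s, E s) (aa : ∀ s, A s) (k n' : ℕ),
      BddAbove (Set.range fun a' : {a' : ∀ s, A s // ∀ s, s ≤ k → a' s = aa s} =>
        ∑ t ∈ Finset.Icc (k+1) n', R t ee a'.1) := by
    intro ee aa k n'
    refine ⟨(Finset.Icc (k+1) n').card • L, ?_⟩
    rintro x ⟨a', rfl⟩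
    exact Finset.sum_le_card_nsmul _ _ _ (fun t _ => (hbound t ee a'.1).2)
  have hle_opt : ∀ (ee : ∀ s, E s) (aa : ∀ s, A s) (k n' : ℕ) (a'' : ∀ s, A s),
      (∀ s, s ≤ k → a'' s = aa s) →
      ∑ t ∈ Finset.Icc (k+1) n', R t ee a'' ≤ OptVal R ee aa k n' := by
    intro ee aa k n' a'' h
    exact le_ciSup (hbdd ee aa k n') ⟨a'', h⟩
  have hopt_le : ∀ (ee : ∀ s, E s) (aa : ∀ s, A s) (k n' : ℕ) (X : ℝ),
      (∀ a'' : ∀ s, A s, (∀ s, s ≤ k → a'' s = aa s) →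
        ∑ t ∈ Finset.Icc (k+1) n', R t ee a'' ≤ X) → OptVal R ee aa k n' ≤ X := by
    intro ee aa k n' X h
    letI := hne aa k
    exact ciSup_le fun p => h p.1 p.2
  have hopt_congr : ∀ (e1 e2 : ∀ s, E s) (a1 a2 : ∀ s, A s) (k n' : ℕ),
      (∀ s, s ≤ n' → e1 s = e2 s) → (∀ s, s ≤ k → a1 s = a2 s) →
      OptVal R e1 a1 k n' = OptVal R e2 a2 k n' := by
    have aux : ∀ (e1 e2 : ∀ s, E s) (a1 a2 : ∀ s, A s) (k n' : ℕ),
        (∀ s, s ≤ n' → e1 s = e2 s) → (∀ s, s ≤ k → a1 s = a2 s) →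
        OptVal R e1 a1 k n' ≤ OptVal R e2 a2 k n' := by
      intro e1 e2 a1 a2 k n' he ha
      refine hopt_le _ _ _ _ _ ?_
      intro a'' h
      have hsum : ∑ t ∈ Finset.Icc (k+1) n', R t e1 a''
          = ∑ t ∈ Finset.Icc (k+1) n', R t e2 a'' := by
        refine Finset.sum_congr rfl fun t ht => ?_
        have ht' := (Finset.mem_Icc.mp ht).2
        exact hprefix t e1 e2 a'' a'' (fun s hs => he s (hs.trans ht')) (fun _ _ => rfl)
      rw [hsum]
      exact hle_opt e2 a2 k n' a'' (fun s hs => (h s hs).trans (ha s hs))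
    intro e1 e2 a1 a2 k n' he ha
    exact le_antisymm (aux e1 e2 a1 a2 k n' he ha)
      (aux e2 e1 a2 a1 k n' (fun s hs => (he s hs).symm) (fun s hs => (ha s hs).symm))
  have hnear : ∀ (ee : ∀ s, E s) (aa : ∀ s, A s) (k n' : ℕ) (ε : ℝ), 0 < ε →
      ∃ a'' : ∀ s, A s, (∀ s, s ≤ k → a'' s = aa s) ∧
        OptVal R ee aa k n' - ε < ∑ t ∈ Finset.Icc (k+1) n', R t ee a'' := by
    intro ee aa k n' ε hε
    letI := hne aa k
    have h : OptVal R ee aa k n' - ε < OptVal R ee aa k n' := sub_lt_self _ hε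
    obtain ⟨p, hp⟩ := exists_lt_of_lt_ciSup h
    exact ⟨p.1, p.2, hp⟩
  have hsple : ∀ (k s : ℕ) (x y : ∀ s, E s), s ≤ k → splice k x y s = x s := by
    intro k s x y h; simp [splice, h]
  have hspgt : ∀ (k s : ℕ) (x y : ∀ s, E s), k < s → splice k x y s = y s := by
    intro k s x y h; simp [splice, not_le.mpr h]
  have hmin : ∀ x : ℝ, L * min (u * x) v ≤ b * L * min x (c / b) := by
    intro x
    have h1 : b * min x (c / b) = min (b * x) c := by
      rw [mul_min_of_nonneg _ _ hb.le, mul_div_cancel₀ _ hb.ne']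
    have h2 : L * min (u * x) v ≤ L * min (b * x) c := by
      refine mul_le_mul_of_nonneg_left ?_ hL
      rw [← hbu]
      exact min_le_min le_rfl hvc
    have h3 : b * L * min x (c / b) = L * min (b * x) c := by rw [← h1]; ring
    linarith
  have hfL : 0 ≤ f * L := by
    have h := hBI 0 0 e e a a (fun _ _ => rfl)
    simpa using h
  have hcL0 : f * L ≤ c * L := mul_le_mul_of_nonneg_right hfc hL
  -- Part 1: one greedy step
  have hstep : ∀ t, m ≤ t → t < m + n →
      OptVal R (splice t e estar) a t M
        ≤ R (t+1) e a + OptVal R (splice (t+1) e estar) a (t+1) M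
          + b * L * min (d (t+1) (e (t+1)) (estar (t+1))) (c / b) := by
    intro t hmt htn
    have htM : t + 1 ≤ M := le_trans (Nat.succ_le_of_lt htn) hmn
    have hdiff : ∀ s, s ≠ t + 1 → splice (t+1) e estar s = splice t e estar s := by
      intro s hs
      rcases le_or_gt s t with h | h
      · rw [hsple _ _ _ _ h, hsple _ _ _ _ (h.trans (Nat.le_succ t))]
      · have h2 : t + 1 < s := lt_of_le_of_ne (Nat.succ_le_of_lt h) (Ne.symm hs)
        rw [hspgt _ _ _ _ h, hspgt _ _ _ _ h2]
    have hlip := hLip t M (splice (t+1) e estar) (splice t e estar) a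
      (le_trans (Nat.le_succ t) htM) hdiff
    rw [hsple (t+1) (t+1) e estar le_rfl, hspgt t (t+1) e estar (Nat.lt_succ_self t)] at hlip
    have hlipL := (abs_le.mp hlip).1
    have hminx := hmin (d (t+1) (e (t+1)) (estar (t+1)))
    obtain ⟨a', ha'1, ha'2⟩ := hgreedy (t+1) (lt_of_le_of_lt hmt (Nat.lt_succ_self t))
    have hopt1 : OptVal R (splice (t+1) e estar) a t M
        ≤ ∑ w ∈ Finset.Icc (t+1) M, R w (splice (t+1) e estar) a' := by
      refine hopt_le _ _ _ _ _ ?_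
      intro a'' h
      exact ha'2 a'' (fun s hs => h s (Nat.lt_succ_iff.mp hs))
    have hsplit : ∑ w ∈ Finset.Icc (t+1) M, R w (splice (t+1) e estar) a'
        = R (t+1) (splice (t+1) e estar) a'
          + ∑ w ∈ Finset.Icc (t+2) M, R w (splice (t+1) e estar) a' := by
      rw [Finset.Icc_add_one_left_eq_Ioc, (by omega : t + 2 = t + 1 + 1), Finset.Icc_add_one_left_eq_Ioc,
        ← Finset.sum_Ioc_consecutive _ (Nat.le_succ t) htM,
        Nat.Ioc_succ_singleton, Finset.sum_singleton]
    have hR : R (t+1) (splice (t+1) e estar) a' = R (t+1) e a :=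
      hprefix _ _ _ _ _ (fun s hs => hsple _ _ _ _ hs) ha'1
    have htail : ∑ w ∈ Finset.Icc (t+2) M, R w (splice (t+1) e estar) a'
        ≤ OptVal R (splice (t+1) e estar) a (t+1) M := by
      have h1 : ∑ w ∈ Finset.Icc (t+2) M, R w (splice (t+1) e estar) a'
          ≤ OptVal R (splice (t+1) e estar) a' (t+1) M :=
        hle_opt _ a' (t+1) M a' (fun _ _ => rfl)
      have h2 : OptVal R (splice (t+1) e estar) a' (t+1) M
          = OptVal R (splice (t+1) e estar) a (t+1) M :=
        hopt_congr _ _ a' a (t+1) M (fun _ _ => rfl) ha'1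
      linarith
    linarith
  -- Part 1': telescoping
  have hA : ∀ j, j ≤ n → OptVal R (splice m e estar) a m M
      ≤ ∑ t ∈ Finset.Icc (m+1) (m+j), R t e a
        + OptVal R (splice (m+j) e estar) a (m+j) M
        + b * L * ∑ i ∈ Finset.Icc (m+1) (m+j), min (d i (e i) (estar i)) (c / b) := by
    intro j
    induction j with
    | zero => intro _; simp
    | succ j ih =>
      intro hj
      have h1 := ih (Nat.le_of_succ_le hj)
      have h2 := hstep (m+j) (Nat.le_add_right m j) (by omega)
      have e1 : m + (j+1) = (m+j) + 1 := rfl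
      rw [e1, Finset.sum_Icc_succ_top (by omega : m + 1 ≤ m + j + 1),
        Finset.sum_Icc_succ_top (by omega : m + 1 ≤ m + j + 1)]
      linarith
  -- Part 2: boundary splice via bounded influence
  have hB : OptVal R (splice m e estar) a m (m+n)
      + OptVal R (splice (m+n) e estar) a (m+n) M
      ≤ OptVal R (splice m e estar) a m M + c * L := by
    have key : ∀ aw : ∀ s, A s, (∀ s, s ≤ m → aw s = a s) →
        ∑ w ∈ Finset.Icc (m+1) (m+n), R w (splice m e estar) aw
          ≤ OptVal R (splice m e estar) a m M + c * L
            - OptVal R (splice (m+n) e estar) a (m+n) M := by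
      intro aw haw
      refine le_of_forall_pos_le_add ?_
      intro ε hε
      obtain ⟨atl, hatl1, hatl2⟩ := hnear (splice m e estar) aw (m+n) M ε hε
      have hfeas : ∀ s, s ≤ m → atl s = a s :=
        fun s hs => (hatl1 s (hs.trans (Nat.le_add_right m n))).trans (haw s hs)
      have hVm : ∑ w ∈ Finset.Icc (m+1) M, R w (splice m e estar) atl
          ≤ OptVal R (splice m e estar) a m M := hle_opt _ a m M atl hfeas
      have hsplit : ∑ w ∈ Finset.Icc (m+1) M, R w (splice m e estar) atl
          = ∑ w ∈ Finset.Icc (m+1) (m+n), R w (splice m e estar) atl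
            + ∑ w ∈ Finset.Icc (m+n+1) M, R w (splice m e estar) atl := by
        rw [Finset.Icc_add_one_left_eq_Ioc, Finset.Icc_add_one_left_eq_Ioc, Finset.Icc_add_one_left_eq_Ioc,
          Finset.sum_Ioc_consecutive _ (Nat.le_add_right m n) hmn]
      have hwin : ∑ w ∈ Finset.Icc (m+1) (m+n), R w (splice m e estar) atl
          = ∑ w ∈ Finset.Icc (m+1) (m+n), R w (splice m e estar) aw := by
        refine Finset.sum_congr rfl fun w hw => ?_
        have hw2 := (Finset.mem_Icc.mp hw).2
        exact hprefix w _ _ _ _ (fun _ _ => rfl) (fun s hs => hatl1 s (hs.trans hw2))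
      have hbi := hBI (m+n) M (splice m e estar) (splice (m+n) e estar) aw a
        (fun s hs => by
          rw [hspgt _ _ _ _ (by omega : m < s), hspgt _ _ _ _ hs])
      have hbi' := (abs_le.mp hbi).1
      linarith
    have hΘ := hopt_le (splice m e estar) a m (m+n) _ key
    linarith
  -- Part 3: multi-coordinate Lipschitz chain
  have hsup_step : ∀ (k : ℕ) (e1 e2 : ∀ s, E s) (δ : ℝ), m ≤ k → k ≤ m + n →
      (∀ s, s ≤ k → e1 s = e2 s) →
      (∀ aw : ∀ s, A s, OptVal R e1 aw k (m+n) ≤ OptVal R e2 aw k (m+n) + δ) →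
      OptVal R e1 a m (m+n) ≤ OptVal R e2 a m (m+n) + δ := by
    intro k e1 e2 δ hmk hk he hstep2
    refine hopt_le _ _ _ _ _ ?_
    intro a'' h
    refine le_of_forall_pos_le_add ?_
    intro ε hε
    have hsplit : ∑ w ∈ Finset.Icc (m+1) (m+n), R w e1 a''
        = ∑ w ∈ Finset.Icc (m+1) k, R w e1 a''
          + ∑ w ∈ Finset.Icc (k+1) (m+n), R w e1 a'' := by
      rw [Finset.Icc_add_one_left_eq_Ioc, Finset.Icc_add_one_left_eq_Ioc, Finset.Icc_add_one_left_eq_Ioc,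
        Finset.sum_Ioc_consecutive _ hmk hk]
    have h1 : ∑ w ∈ Finset.Icc (k+1) (m+n), R w e1 a'' ≤ OptVal R e1 a'' k (m+n) :=
      hle_opt _ _ _ _ a'' (fun _ _ => rfl)
    have h2 := hstep2 a''
    obtain ⟨atl, hatl1, hatl2⟩ := hnear e2 a'' k (m+n) ε hε
    have hfeas : ∀ s, s ≤ m → atl s = a s := fun s hs => (hatl1 s (hs.trans hmk)).trans (h s hs)
    have h3 : ∑ w ∈ Finset.Icc (m+1) (m+n), R w e2 atl ≤ OptVal R e2 a m (m+n) :=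
      hle_opt _ _ _ _ atl hfeas
    have hsplit2 : ∑ w ∈ Finset.Icc (m+1) (m+n), R w e2 atl
        = ∑ w ∈ Finset.Icc (m+1) k, R w e2 atl
          + ∑ w ∈ Finset.Icc (k+1) (m+n), R w e2 atl := by
      rw [Finset.Icc_add_one_left_eq_Ioc, Finset.Icc_add_one_left_eq_Ioc, Finset.Icc_add_one_left_eq_Ioc,
        Finset.sum_Ioc_consecutive _ hmk hk]
    have h4 : ∑ w ∈ Finset.Icc (m+1) k, R w e2 atl = ∑ w ∈ Finset.Icc (m+1) k, R w e1 a'' := by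
      refine Finset.sum_congr rfl fun w hw => ?_
      have hw2 := (Finset.mem_Icc.mp hw).2
      exact hprefix w e2 e1 atl a'' (fun s hs => (he s (hs.trans hw2)).symm)
        (fun s hs => hatl1 s (hs.trans hw2))
    linarith
  have hMLstep : ∀ k, m ≤ k → k < m + n →
      OptVal R (splice k (splice m e estar) e) a m (m+n)
        ≤ OptVal R (splice (k+1) (splice m e estar) e) a m (m+n)
          + b * L * min (d (k+1) (e (k+1)) (estar (k+1))) (c / b) := by
    intro k hmk hk
    refine hsup_step k _ _ _ hmk (le_of_lt hk) ?_ ?_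
    · intro s hs
      rw [hsple _ _ _ _ hs, hsple _ _ _ _ (hs.trans (Nat.le_succ k))]
    · intro aw
      have hdiff : ∀ s, s ≠ k + 1 →
          splice k (splice m e estar) e s = splice (k+1) (splice m e estar) e s := by
        intro s hs
        rcases le_or_gt s k with h | h
        · rw [hsple _ _ _ _ h, hsple _ _ _ _ (h.trans (Nat.le_succ k))]
        · have h2 : k + 1 < s := lt_of_le_of_ne (Nat.succ_le_of_lt h) (Ne.symm hs)
          rw [hspgt _ _ _ _ h, hspgt _ _ _ _ h2]
      have hlip := hLip k (m+n) (splice k (splice m e estar) e)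
        (splice (k+1) (splice m e estar) e) aw (le_of_lt hk) hdiff
      rw [hspgt k (k+1) _ _ (Nat.lt_succ_self k),
        hsple (k+1) (k+1) (splice m e estar) e le_rfl,
        hspgt m (k+1) e estar (by omega)] at hlip
      have hlipL := (abs_le.mp hlip).2
      have hminx := hmin (d (k+1) (e (k+1)) (estar (k+1)))
      linarith
  have hML : ∀ j, j ≤ n →
      OptVal R (splice m (splice m e estar) e) a m (m+n)
        ≤ OptVal R (splice (m+j) (splice m e estar) e) a m (m+n)
          + b * L * ∑ i ∈ Finset.Icc (m+1) (m+j), min (d i (e i) (estar i)) (c / b) := by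
    intro j
    induction j with
    | zero => intro _; simp
    | succ j ih =>
      intro hj
      have h1 := ih (Nat.le_of_succ_le hj)
      have h2 := hMLstep (m+j) (Nat.le_add_right m j) (by omega)
      have e1 : m + (j+1) = (m+j) + 1 := rfl
      rw [e1, Finset.sum_Icc_succ_top (by omega : m + 1 ≤ m + j + 1)]
      linarith
  -- identifications
  have hid1 : OptVal R (splice m (splice m e estar) e) a m (m+n) = OptVal R e a m (m+n) := by
    refine hopt_congr _ _ a a m (m+n) ?_ (fun _ _ => rfl)
    intro s _
    rcases le_or_gt s m with h | h
    · rw [hsple _ _ _ _ h, hsple _ _ _ _ h]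
    · rw [hspgt _ _ _ _ h]
  have hid2 : OptVal R (splice (m+n) (splice m e estar) e) a m (m+n)
      = OptVal R (splice m e estar) a m (m+n) := by
    refine hopt_congr _ _ a a m (m+n) ?_ (fun _ _ => rfl)
    intro s hs
    rw [hsple _ _ _ _ hs]
  have hAn := hA n le_rfl
  have hMLn := hML n le_rfl
  rw [hid1, hid2] at hMLn
  linarith
end

section
/- Let η ∈ (0,1], ε ∈ (0,η), c ≥ b ≥ 1, L > 0, and let a sequence of epoch values be given: odd epochs i earn at least (η-ε)·V*_i + 10cL·I(i<N) - 2cL·I(i>1), and even epochs earn at least η·V*_i - 8cL, where V*_i ≥ 0 are the optimal epoch values summing to Opt. Then the total earned reward is at least (η-ε)·Opt. -/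
/-- Auxiliary: the indicator surplus function. -/
noncomputable def gAux (c L : ℝ) (N i : ℕ) : ℝ :=
  if Odd i then 10*c*L*(if i < N then 1 else 0) - 2*c*L*(if 1 < i then 1 else 0)
  else -(8*c*L)

lemma gAux_key (c L : ℝ) (hcL : 0 < c * L) (n : ℕ) :
    ∑ i ∈ Finset.Icc 1 n, gAux c L n i ≥
      2*c*L * (if Even n ∧ 2 ≤ n then 1 else 0) := by
  induction n with
  | zero => simp
  | succ m ih =>
    rcases Nat.eq_zero_or_pos m with rfl | hm
    · simp [gAux]
    · have h1 : (1:ℕ) ≤ m + 1 := by omega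
      have h2 : (1:ℕ) ≤ m := hm
      rw [Finset.sum_Icc_succ_top h1]
      have hsplitm1 : ∑ i ∈ Finset.Icc 1 m, gAux c L (m+1) i
          = ∑ i ∈ Finset.Icc 1 (m-1), gAux c L (m+1) i + gAux c L (m+1) m := by
        have : m = (m-1) + 1 := by omega
        rw [this, Finset.sum_Icc_succ_top (by omega)]
        simp [← this]
      have hsplitm : ∑ i ∈ Finset.Icc 1 m, gAux c L m i
          = ∑ i ∈ Finset.Icc 1 (m-1), gAux c L m i + gAux c L m m := by
        have : m = (m-1) + 1 := by omega
        rw [this, Finset.sum_Icc_succ_top (by omega)]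
        simp [← this]
      have hcongr : ∑ i ∈ Finset.Icc 1 (m-1), gAux c L (m+1) i
          = ∑ i ∈ Finset.Icc 1 (m-1), gAux c L m i := by
        apply Finset.sum_congr rfl
        intro i hi
        simp only [Finset.mem_Icc] at hi
        have hi1 : i < m := by omega
        have hi2 : i < m + 1 := by omega
        simp [gAux, hi1, hi2]
      rcases Nat.even_or_odd m with he | ho
      · -- m even, m ≥ 2 (since m ≥ 1 and even ⇒ m ≥ 2)
        have hm2 : 2 ≤ m := by
          rcases he with ⟨k, hk⟩; omega
        have hne : ¬ Odd m := by simp [Nat.not_odd_iff_even]; exact he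
        have hgm1 : gAux c L (m+1) m = gAux c L m m := by simp [gAux, hne]
        have hodd1 : Odd (m+1) := Even.add_one he
        have hterm : gAux c L (m+1) (m+1) = -(2*c*L) := by
          have : ¬ (m+1 < m+1) := lt_irrefl _
          simp [gAux, hodd1, this, show 1 < m+1 by omega]
        have hih' : 2*c*L * (if Even m ∧ 2 ≤ m then 1 else 0) = 2*c*L := by
          simp [he, hm2]
        rw [hsplitm1, hcongr, hterm, hgm1]
        rw [hsplitm, hih'] at ih
        have hrhs : 2*c*L * (if Even (m+1) ∧ 2 ≤ m+1 then 1 else 0) = 0 := by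
          have : ¬ Even (m+1) := by
            rw [Nat.even_add_one]; simpa using he
          simp [this]
        rw [hrhs]
        linarith
      · -- m odd
        have hgm1 : gAux c L (m+1) m = gAux c L m m + 10*c*L := by
          have h3 : m < m + 1 := Nat.lt_succ_self m
          have h4 : ¬ (m < m) := lt_irrefl _
          simp [gAux, ho, h3, h4]; ring
        have heven1 : Even (m+1) := Odd.add_one ho
        have hterm : gAux c L (m+1) (m+1) = -(8*c*L) := by
          have : ¬ Odd (m+1) := by simp [Nat.not_odd_iff_even]; exact heven1
          simp [gAux, this]
        have hih' : (0:ℝ) ≤ ∑ i ∈ Finset.Icc 1 m, gAux c L m i := by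
          have : 2*c*L * (if Even m ∧ 2 ≤ m then 1 else 0) = 0 := by
            have : ¬ Even m := by simpa using ho
            simp [this]
          linarith [ih, this ▸ ih]
        have hrhs : 2*c*L * (if Even (m+1) ∧ 2 ≤ m+1 then 1 else 0) = 2*c*L := by
          simp [heven1, show 2 ≤ m+1 by omega]
        rw [hsplitm1, hcongr, hterm, hgm1, hrhs]
        rw [hsplitm] at hih'
        linarith

/-- Robustness aggregation step of Theorem 1 (AdaSwitch with a 1-offline oracle):
with η ∈ (0,1], ε ∈ (0,η), c ≥ b ≥ 1, L > 0, if over `N` epochs the earned rewards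
satisfy `earn i ≥ (η-ε)·V i + 10cL·I(i<N) - 2cL·I(i>1)` at odd epochs and
`earn i ≥ η·V i - 8cL` at even epochs, where the nonnegative optimal epoch values
`V i` sum to `Opt`, then the total earned reward is at least `(η-ε)·Opt`. -/
theorem stmt_18 (η ε b c L : ℝ) (hη0 : 0 < η) (hη1 : η ≤ 1)
    (hε : 0 < ε) (hεη : ε < η) (hb : 1 ≤ b) (hbc : b ≤ c) (hL : 0 < L)
    (N : ℕ) (V earn : ℕ → ℝ) (hV : ∀ i, 0 ≤ V i)
    (Opt : ℝ) (hOpt : ∑ i ∈ Finset.Icc 1 N, V i = Opt)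
    (hodd : ∀ i ∈ Finset.Icc 1 N, Odd i →
      earn i ≥ (η - ε) * V i + 10 * c * L * (if i < N then 1 else 0)
        - 2 * c * L * (if 1 < i then 1 else 0))
    (heven : ∀ i ∈ Finset.Icc 1 N, Even i → earn i ≥ η * V i - 8 * c * L) :
    ∑ i ∈ Finset.Icc 1 N, earn i ≥ (η - ε) * Opt := by
  have hcL : (0:ℝ) < c * L := mul_pos (by linarith) hL
  have hpt : ∀ i ∈ Finset.Icc 1 N, (η - ε) * V i + gAux c L N i ≤ earn i := by
    intro i hi
    rcases Nat.even_or_odd i with he | ho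
    · have hne : ¬ Odd i := by simp [Nat.not_odd_iff_even]; exact he
      have := heven i hi he
      have hVi := hV i
      simp only [gAux, hne, if_false]
      nlinarith
    · have := hodd i hi ho
      simp only [gAux, ho, if_pos]
      linarith
  have hsum := Finset.sum_le_sum hpt
  rw [Finset.sum_add_distrib] at hsum
  have hkey := gAux_key c L hcL N
  have hind : (0:ℝ) ≤ 2*c*L * (if Even N ∧ 2 ≤ N then 1 else 0) := by
    split <;> nlinarith [hcL]
  rw [← Finset.mul_sum, hOpt] at hsum
  linarith
end
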